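/- arXiv:2010.05015 — 2 statements merged into one kernel-verified Lean document; each statement's English description precedes it below -/
import Mathlib

section
/- Let N, r, s ∈ ℕ and let A ∈ ℍ^{N×N}, B ∈ ℍ^{N×s}, C ∈ ℍ^{r×N}, D ∈ ℍ^{r×s} satisfy AᴴA + CᴴC = I_N, BᴴB + DᴴD = I_s, and DᴴC + BᴴA = 0 (i.e. the block matrix [[A, B], [C, D]] is an isometry, equivalently its conjugate transpose is a co-isometry). Define b₀ = D and b_n = C·A^{n−1}·B ∈ ℍ^{r×s} for n ≥ 1. Then the series Σ_{n=0}^∞ b_nᴴ·b_n converges with sum I_s, and for every k ≥ 1 the series Σ_{n=0}^∞ b_nᴴ·b_{n+k} converges with sum 0. (Equivalently, the lower triangular block Toeplitz operator built from the sequence (b_n) is an isometry from ℓ²(ℕ, ℍ^s) into ℓ²(ℕ, ℍ^r); when [[A,B],[C,D]] is unitary and r = s this Toeplitz operator is unitary, and the multiplier S(x) = D + Σ_{n≥1} P_n(x)·C·A^{n−1}·B is a Blaschke function whose multiplication operator is an isometry of the Hardy space.) -/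
open Quaternion Matrix

noncomputable section

open Filter Topology Finset

namespace BlaschkeAux

lemma re_sum {ι : Type*} (t : Finset ι) (f : ι → ℍ[ℝ]) :
    (∑ i ∈ t, f i).re = ∑ i ∈ t, (f i).re :=
  map_sum (show ℍ[ℝ] →ₗ[ℝ] ℝ from QuaternionAlgebra.reₗ _ _ _) f t

lemma re_star_mul_self (q : ℍ[ℝ]) : (star q * q).re = ‖q‖ ^ 2 := by
  rw [Quaternion.star_mul_self, Quaternion.re_coe, Quaternion.normSq_eq_norm_mul_self, sq]

lemma abs_re_le_norm (q : ℍ[ℝ]) : |q.re| ≤ ‖q‖ := by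
  have h : ‖q‖ ^ 2 = q.re ^ 2 + q.imI ^ 2 + q.imJ ^ 2 + q.imK ^ 2 := by
    rw [sq, ← Quaternion.normSq_eq_norm_mul_self, Quaternion.normSq_def']
  nlinarith [sq_abs q.re, norm_nonneg q, abs_nonneg q.re]

variable {m n p : Type*} [Fintype m] [Fintype n] [Fintype p]

def psi (M : Matrix n n ℍ[ℝ]) : ℝ := (Matrix.trace M).re

lemma psi_add (M M' : Matrix n n ℍ[ℝ]) : psi (M + M') = psi M + psi M' := by
  simp [psi, Matrix.trace_add]

lemma psi_sub (M M' : Matrix n n ℍ[ℝ]) : psi (M - M') = psi M - psi M' := by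
  simp [psi, Matrix.trace_sub]

lemma psi_sum {ι : Type*} (t : Finset ι) (f : ι → Matrix n n ℍ[ℝ]) :
    psi (∑ i ∈ t, f i) = ∑ i ∈ t, psi (f i) := by
  simp [psi, Matrix.trace_sum, re_sum]

lemma psi_one [DecidableEq n] : psi (1 : Matrix n n ℍ[ℝ]) = Fintype.card n := by
  simp [psi, Matrix.trace_one]

lemma psi_zero : psi (0 : Matrix n n ℍ[ℝ]) = 0 := by simp [psi]

def phi (X Y : Matrix m n ℍ[ℝ]) : ℝ := psi (Xᴴ * Y)

def en (X : Matrix m n ℍ[ℝ]) : ℝ := phi X X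

lemma phi_eq_sum (X Y : Matrix m n ℍ[ℝ]) :
    phi X Y = ∑ j, ∑ i, (star (X i j) * Y i j).re := by
  simp [phi, psi, Matrix.trace, Matrix.diag, Matrix.mul_apply,
    Matrix.conjTranspose_apply, re_sum]

lemma en_eq_sum (X : Matrix m n ℍ[ℝ]) : en X = ∑ j, ∑ i, ‖X i j‖ ^ 2 := by
  rw [en, phi_eq_sum]
  exact Finset.sum_congr rfl fun j _ => Finset.sum_congr rfl fun i _ => re_star_mul_self _

lemma en_nonneg (X : Matrix m n ℍ[ℝ]) : 0 ≤ en X := by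
  rw [en_eq_sum]; positivity

lemma en_zero : en (0 : Matrix m n ℍ[ℝ]) = 0 := by simp [en_eq_sum]

lemma col_sq_le_en (X : Matrix m n ℍ[ℝ]) (j : n) : ∑ i, ‖X i j‖ ^ 2 ≤ en X := by
  rw [en_eq_sum]
  exact Finset.single_le_sum (f := fun j => ∑ i, ‖X i j‖ ^ 2)
    (fun _ _ => by positivity) (mem_univ j)

lemma sq_entry_le_en (X : Matrix m n ℍ[ℝ]) (i : m) (j : n) : ‖X i j‖ ^ 2 ≤ en X := by
  refine le_trans ?_ (col_sq_le_en X j)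
  exact Finset.single_le_sum (f := fun i => ‖X i j‖ ^ 2) (fun _ _ => by positivity) (mem_univ i)

lemma en_eq_zero {X : Matrix m n ℍ[ℝ]} (h : en X = 0) : X = 0 := by
  refine Matrix.ext fun i j => ?_
  have h1 := sq_entry_le_en X i j
  have h2 : ‖X i j‖ = 0 := by nlinarith [norm_nonneg (X i j)]
  rw [Matrix.zero_apply]
  exact norm_eq_zero.mp h2

lemma en_neg (X : Matrix m n ℍ[ℝ]) : en (-X) = en X := by simp [en_eq_sum]

lemma en_sub_comm (X Y : Matrix m n ℍ[ℝ]) : en (X - Y) = en (Y - X) := by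
  rw [← en_neg (X - Y), neg_sub]

lemma en_mul_le (P : Matrix m n ℍ[ℝ]) (X : Matrix n p ℍ[ℝ]) :
    en (P * X) ≤ en P * en X := by
  have hentry : ∀ i j, ‖(P * X) i j‖ ^ 2 ≤ (∑ l, ‖P i l‖ ^ 2) * (∑ l, ‖X l j‖ ^ 2) := by
    intro i j
    have h1 : ‖(P * X) i j‖ ≤ ∑ l, ‖P i l‖ * ‖X l j‖ := by
      rw [Matrix.mul_apply]
      refine (norm_sum_le _ _).trans ?_
      exact Finset.sum_le_sum fun l _ => (norm_mul_le _ _)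
    have h2 : (∑ l, ‖P i l‖ * ‖X l j‖) ^ 2 ≤ (∑ l, ‖P i l‖ ^ 2) * (∑ l, ‖X l j‖ ^ 2) :=
      Finset.sum_mul_sq_le_sq_mul_sq _ _ _
    have h3 : (0:ℝ) ≤ ∑ l, ‖P i l‖ * ‖X l j‖ := by positivity
    nlinarith [norm_nonneg ((P * X) i j)]
  calc en (P * X) = ∑ j, ∑ i, ‖(P * X) i j‖ ^ 2 := en_eq_sum _
    _ ≤ ∑ j, ∑ i, (∑ l, ‖P i l‖ ^ 2) * (∑ l, ‖X l j‖ ^ 2) := by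
        refine Finset.sum_le_sum fun j _ => Finset.sum_le_sum fun i _ => hentry i j
    _ = (∑ i, ∑ l, ‖P i l‖ ^ 2) * (∑ j, ∑ l, ‖X l j‖ ^ 2) := by
        rw [Finset.sum_comm (s := univ) (t := univ)
          (f := fun j i => (∑ l, ‖P i l‖ ^ 2) * (∑ l, ‖X l j‖ ^ 2))]
        rw [← Finset.sum_mul_sum]
    _ = en P * en X := by rw [en_eq_sum, en_eq_sum, Finset.sum_comm]

lemma abs_phi_le_sum (X Y : Matrix m n ℍ[ℝ]) :
    |phi X Y| ≤ ∑ j, ∑ i, ‖X i j‖ * ‖Y i j‖ := by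
  rw [phi_eq_sum]
  refine (Finset.abs_sum_le_sum_abs _ _).trans ?_
  refine Finset.sum_le_sum fun j _ => ?_
  refine (Finset.abs_sum_le_sum_abs _ _).trans ?_
  refine Finset.sum_le_sum fun i _ => ?_
  refine (abs_re_le_norm _).trans ?_
  rw [norm_mul, norm_star]

lemma abs_phi_sq_le (X Y : Matrix m n ℍ[ℝ]) : (phi X Y) ^ 2 ≤ en X * en Y := by
  have h1 := abs_phi_le_sum X Y
  have h2 : (∑ j, ∑ i, ‖X i j‖ * ‖Y i j‖) ^ 2 ≤ en X * en Y := by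
    rw [en_eq_sum, en_eq_sum, ← Finset.sum_product', ← Finset.sum_product', ← Finset.sum_product']
    exact Finset.sum_mul_sq_le_sq_mul_sq _ _ _
  have h3 : (0:ℝ) ≤ ∑ j, ∑ i, ‖X i j‖ * ‖Y i j‖ := by positivity
  nlinarith [abs_nonneg (phi X Y), sq_abs (phi X Y)]

lemma abs_phi_le_half (X Y : Matrix m n ℍ[ℝ]) : |phi X Y| ≤ (en X + en Y) / 2 := by
  refine (abs_phi_le_sum X Y).trans ?_
  have h : ∀ j : n, ∀ i : m, ‖X i j‖ * ‖Y i j‖ ≤ (‖X i j‖ ^ 2 + ‖Y i j‖ ^ 2) / 2 := by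
    intro j i; nlinarith [sq_nonneg (‖X i j‖ - ‖Y i j‖)]
  calc (∑ j, ∑ i, ‖X i j‖ * ‖Y i j‖)
      ≤ ∑ j, ∑ i, (‖X i j‖ ^ 2 + ‖Y i j‖ ^ 2) / 2 :=
        Finset.sum_le_sum fun j _ => Finset.sum_le_sum fun i _ => h j i
    _ = (en X + en Y) / 2 := by
        rw [en_eq_sum, en_eq_sum]
        rw [← Finset.sum_add_distrib]
        rw [eq_div_iff (by norm_num : (2:ℝ) ≠ 0)]
        rw [Finset.sum_mul]
        refine Finset.sum_congr rfl fun j _ => ?_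
        rw [← Finset.sum_add_distrib, Finset.sum_mul]
        refine Finset.sum_congr rfl fun i _ => ?_
        ring

lemma phi_symm (X Y : Matrix m n ℍ[ℝ]) : phi X Y = phi Y X := by
  unfold phi psi
  have : Yᴴ * X = (Xᴴ * Y)ᴴ := by rw [conjTranspose_mul, conjTranspose_conjTranspose]
  rw [this, Matrix.trace_conjTranspose]
  simp

lemma phi_sub_right (X Y Z : Matrix m n ℍ[ℝ]) : phi X (Y - Z) = phi X Y - phi X Z := by
  unfold phi; rw [Matrix.mul_sub, psi_sub]

lemma en_add (X Y : Matrix m n ℍ[ℝ]) : en (X + Y) = en X + 2 * phi X Y + en Y := by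
  unfold en phi
  have : (X + Y)ᴴ * (X + Y) = Xᴴ * X + (Xᴴ * Y + (Yᴴ * X + Yᴴ * Y)) := by
    rw [conjTranspose_add, Matrix.add_mul, Matrix.mul_add, Matrix.mul_add]
    abel
  rw [this, psi_add, psi_add, psi_add]
  have hsymm := phi_symm X Y
  unfold phi at hsymm
  rw [← hsymm]; ring

lemma en_decomp (X Y : Matrix m n ℍ[ℝ]) :
    en X = en (X - Y) + 2 * phi (X - Y) Y + en Y := by
  conv_lhs => rw [← sub_add_cancel X Y]
  rw [en_add]

lemma psi_neg (M : Matrix n n ℍ[ℝ]) : psi (-M) = - psi M := by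
  simp [psi]

lemma phi_neg_right (X Y : Matrix m n ℍ[ℝ]) : phi X (-Y) = - phi X Y := by
  unfold phi; rw [Matrix.mul_neg, psi_neg]

lemma en_sub (X Y : Matrix m n ℍ[ℝ]) : en (X - Y) = en X - 2 * phi X Y + en Y := by
  rw [sub_eq_add_neg, en_add, phi_neg_right, en_neg]; ring

lemma en_sub_le (X Y : Matrix m n ℍ[ℝ]) : en (X - Y) ≤ 2 * en X + 2 * en Y := by
  have h := en_sub X Y
  have h2 := abs_phi_le_half X Y
  have h3 := abs_le.mp h2
  linarith [h3.1, h3.2]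

lemma norm_entry_conj_mul_le (X Y : Matrix m n ℍ[ℝ]) (i j : n) :
    ‖(Xᴴ * Y) i j‖ ≤ (en X + en Y) / 2 := by
  rw [Matrix.mul_apply]
  simp only [Matrix.conjTranspose_apply]
  have hterm : ∀ l : m, ‖star (X l i) * Y l j‖ ≤ (‖X l i‖ ^ 2 + ‖Y l j‖ ^ 2) / 2 := by
    intro l
    rw [norm_mul, norm_star]
    nlinarith [sq_nonneg (‖X l i‖ - ‖Y l j‖)]
  calc ‖∑ l, star (X l i) * Y l j‖ ≤ ∑ l, ‖star (X l i) * Y l j‖ := norm_sum_le _ _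
    _ ≤ ∑ l, (‖X l i‖ ^ 2 + ‖Y l j‖ ^ 2) / 2 := Finset.sum_le_sum fun l _ => hterm l
    _ = ((∑ l, ‖X l i‖ ^ 2) + (∑ l, ‖Y l j‖ ^ 2)) / 2 := by
        rw [← Finset.sum_add_distrib, Finset.sum_div]
    _ ≤ (en X + en Y) / 2 := by
        have hx := col_sq_le_en X i
        have hy := col_sq_le_en Y j
        linarith

def LimE (f : ℕ → Matrix m n ℍ[ℝ]) (v : Matrix m n ℍ[ℝ]) : Prop :=
  Tendsto (fun k => en (f k - v)) atTop (𝓝 0)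

lemma tendsto_phi_zero {Z : ℕ → Matrix m n ℍ[ℝ]} (Y : Matrix m n ℍ[ℝ])
    (h : Tendsto (fun k => en (Z k)) atTop (𝓝 0)) :
    Tendsto (fun k => phi (Z k) Y) atTop (𝓝 0) := by
  have hb : ∀ k, ‖phi (Z k) Y‖ ≤ Real.sqrt (en (Z k) * en Y) := by
    intro k
    rw [Real.norm_eq_abs]
    exact Real.abs_le_sqrt (abs_phi_sq_le _ _)
  have hg : Tendsto (fun k => Real.sqrt (en (Z k) * en Y)) atTop (𝓝 0) := by
    have h1 : Tendsto (fun k => en (Z k) * en Y) atTop (𝓝 (0 * en Y)) := h.mul_const _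
    rw [zero_mul] at h1
    have := h1.sqrt
    rwa [Real.sqrt_zero] at this
  exact squeeze_zero_norm hb hg

lemma LimE.phi_tendsto_left {f : ℕ → Matrix m n ℍ[ℝ]} {v : Matrix m n ℍ[ℝ]}
    (h : LimE f v) (Y : Matrix m n ℍ[ℝ]) :
    Tendsto (fun k => phi (f k) Y) atTop (𝓝 (phi v Y)) := by
  have h1 : Tendsto (fun k => phi (f k - v) Y) atTop (𝓝 0) := tendsto_phi_zero Y h
  have h2 : ∀ k, phi (f k - v) Y = phi (f k) Y - phi v Y := by
    intro k
    rw [phi_symm, phi_sub_right, phi_symm Y (f k), phi_symm Y v]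
  rw [tendsto_sub_nhds_zero_iff.symm]
  exact h1.congr h2

lemma LimE.phi_tendsto_right {f : ℕ → Matrix m n ℍ[ℝ]} {v : Matrix m n ℍ[ℝ]}
    (h : LimE f v) (X : Matrix m n ℍ[ℝ]) :
    Tendsto (fun k => phi X (f k)) atTop (𝓝 (phi X v)) := by
  have := h.phi_tendsto_left X
  simp only [phi_symm _ X] at this
  exact this

lemma LimE.en_tendsto {f : ℕ → Matrix m n ℍ[ℝ]} {v : Matrix m n ℍ[ℝ]} (h : LimE f v) :
    Tendsto (fun k => en (f k)) atTop (𝓝 (en v)) := by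
  have hphi : Tendsto (fun k => phi (f k - v) v) atTop (𝓝 0) := tendsto_phi_zero v h
  have H : Tendsto (fun k => en (f k - v) + (2 * phi (f k - v) v + en v)) atTop
      (𝓝 (0 + (2 * 0 + en v))) := h.add ((hphi.const_mul 2).add tendsto_const_nhds)
  rw [show (0:ℝ) + (2 * 0 + en v) = en v by ring] at H
  refine H.congr fun k => ?_
  rw [en_decomp (f k) v]; ring

lemma LimE.eq_zero {f : ℕ → Matrix m n ℍ[ℝ]} {v : Matrix m n ℍ[ℝ]} (h : LimE f v)
    (h0 : Tendsto (fun k => en (f k)) atTop (𝓝 0)) : v = 0 := by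
  have := tendsto_nhds_unique h.en_tendsto h0
  exact en_eq_zero this

lemma LimE.mul_left {f : ℕ → Matrix n p ℍ[ℝ]} {v : Matrix n p ℍ[ℝ]}
    (h : LimE f v) (P : Matrix m n ℍ[ℝ]) : LimE (fun k => P * f k) (P * v) := by
  have hb : ∀ k, en (P * f k - P * v) ≤ en P * en (f k - v) := by
    intro k
    rw [← Matrix.mul_sub]
    exact en_mul_le _ _
  have hg : Tendsto (fun k => en P * en (f k - v)) atTop (𝓝 (en P * 0)) := h.const_mul _
  rw [mul_zero] at hg
  exact squeeze_zero (fun k => en_nonneg _) hb hg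

section Compactness

attribute [local instance] Matrix.normedAddCommGroup Matrix.normedSpace

lemma exists_subseq_limE (f : ℕ → Matrix m n ℍ[ℝ]) (R : ℝ) (hb : ∀ k, en (f k) ≤ R) :
    ∃ v : Matrix m n ℍ[ℝ], ∃ σ : ℕ → ℕ, StrictMono σ ∧ LimE (fun i => f (σ i)) v := by
  have hnorm : ∀ k, ‖f k‖ ≤ Real.sqrt R := by
    intro k
    rw [Matrix.norm_le_iff (Real.sqrt_nonneg R)]
    intro i j
    have h1 : ‖f k i j‖ ^ 2 ≤ R := (sq_entry_le_en _ i j).trans (hb k)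
    exact Real.le_sqrt_of_sq_le h1
  have hmem : ∀ k, f k ∈ Metric.closedBall (0 : Matrix m n ℍ[ℝ]) (Real.sqrt R) := by
    intro k; rw [Metric.mem_closedBall, dist_zero_right]; exact hnorm k
  obtain ⟨v, _, σ, hσ, hlim⟩ :=
    (isCompact_closedBall (0 : Matrix m n ℍ[ℝ]) (Real.sqrt R)).tendsto_subseq hmem
  refine ⟨v, σ, hσ, ?_⟩
  have hnz : Tendsto (fun i => ‖f (σ i) - v‖) atTop (𝓝 0) := by
    have h1 : Tendsto (fun i => f (σ i) - v) atTop (𝓝 (v - v)) :=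
      (hlim.sub tendsto_const_nhds)
    rw [sub_self] at h1
    simpa using h1.norm
  have hbound : ∀ i, en (f (σ i) - v) ≤
      (Fintype.card n * Fintype.card m) * ‖f (σ i) - v‖ ^ 2 := by
    intro i
    calc en (f (σ i) - v) = ∑ j, ∑ i', ‖(f (σ i) - v) i' j‖ ^ 2 := en_eq_sum _
      _ ≤ ∑ _j : n, ∑ _i' : m, ‖f (σ i) - v‖ ^ 2 := by
          refine Finset.sum_le_sum fun j _ => Finset.sum_le_sum fun i' _ => ?_
          have := Matrix.norm_entry_le_entrywise_sup_norm (f (σ i) - v) (i := i') (j := j)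
          nlinarith [norm_nonneg ((f (σ i) - v) i' j)]
      _ = (Fintype.card n * Fintype.card m) * ‖f (σ i) - v‖ ^ 2 := by
          simp [Finset.sum_const, Finset.card_univ, mul_assoc]
  have hg : Tendsto (fun i => (Fintype.card n * Fintype.card m : ℝ) * ‖f (σ i) - v‖ ^ 2)
      atTop (𝓝 ((Fintype.card n * Fintype.card m : ℝ) * 0)) := by
    refine Tendsto.const_mul _ ?_
    have := hnz.pow 2
    simpa using this
  rw [mul_zero] at hg
  exact squeeze_zero (fun i => en_nonneg _) hbound hg

end Compactness

section Main

variable {N r s : ℕ} {A : Matrix (Fin N) (Fin N) ℍ[ℝ]} {B : Matrix (Fin N) (Fin s) ℍ[ℝ]}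
  {C : Matrix (Fin r) (Fin N) ℍ[ℝ]} {D : Matrix (Fin r) (Fin s) ℍ[ℝ]}

lemma key0 (h1 : Aᴴ * A + Cᴴ * C = 1) (X Y : Matrix (Fin N) (Fin s) ℍ[ℝ]) :
    (C * X)ᴴ * (C * Y) + (A * X)ᴴ * (A * Y) = Xᴴ * Y := by
  rw [conjTranspose_mul, conjTranspose_mul, Matrix.mul_assoc, Matrix.mul_assoc,
    ← Matrix.mul_assoc Cᴴ, ← Matrix.mul_assoc Aᴴ, ← Matrix.mul_add, ← Matrix.add_mul,
    add_comm (Cᴴ * C), h1, Matrix.one_mul]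

lemma en_step (h1 : Aᴴ * A + Cᴴ * C = 1) (X : Matrix (Fin N) (Fin s) ℍ[ℝ]) :
    en (C * X) + en (A * X) = en X := by
  have h := key0 h1 X X
  unfold en phi
  rw [← psi_add, h]

lemma pow_mul_assoc (m : ℕ) (X : Matrix (Fin N) (Fin s) ℍ[ℝ]) :
    A * (A ^ m * X) = A ^ (m + 1) * X := by
  rw [← Matrix.mul_assoc, ← pow_succ']

lemma tele1 (h1 : Aᴴ * A + Cᴴ * C = 1) (h2 : Bᴴ * B + Dᴴ * D = 1)
    (b : ℕ → Matrix (Fin r) (Fin s) ℍ[ℝ])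
    (hb0 : b 0 = D) (hbn : ∀ n : ℕ, b (n + 1) = C * A ^ n * B) (m : ℕ) :
    ∑ n ∈ range (m + 1), (b n)ᴴ * b n = 1 - (A ^ m * B)ᴴ * (A ^ m * B) := by
  induction m with
  | zero =>
    rw [sum_range_one, hb0, pow_zero, Matrix.one_mul]
    exact eq_sub_of_add_eq' h2
  | succ m ih =>
    rw [sum_range_succ, ih, hbn m, Matrix.mul_assoc]
    have h := key0 h1 (A ^ m * B) (A ^ m * B)
    rw [pow_mul_assoc] at h
    rw [eq_sub_of_add_eq h]
    abel

lemma tele2 (h1 : Aᴴ * A + Cᴴ * C = 1) (h3 : Dᴴ * C + Bᴴ * A = 0)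
    (b : ℕ → Matrix (Fin r) (Fin s) ℍ[ℝ])
    (hb0 : b 0 = D) (hbn : ∀ n : ℕ, b (n + 1) = C * A ^ n * B) (k m : ℕ) :
    ∑ n ∈ range (m + 1), (b n)ᴴ * b (n + (k + 1)) =
      -((A ^ m * B)ᴴ * (A ^ (m + (k + 1)) * B)) := by
  have hDC : Dᴴ * C = -(Bᴴ * A) := eq_neg_of_add_eq_zero_left h3
  induction m with
  | zero =>
    rw [sum_range_one, hb0]
    simp only [zero_add]
    rw [hbn k, pow_zero, Matrix.one_mul]
    rw [← Matrix.mul_assoc Dᴴ, ← Matrix.mul_assoc Dᴴ, hDC]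
    simp only [Matrix.neg_mul, pow_succ', Matrix.mul_assoc]
  | succ m ih =>
    rw [sum_range_succ, ih]
    have e1 : m + 1 + (k + 1) = m + (k + 1) + 1 := by omega
    rw [e1, hbn (m + (k + 1)), hbn m, Matrix.mul_assoc C, Matrix.mul_assoc C]
    have h := key0 h1 (A ^ m * B) (A ^ (m + (k + 1)) * B)
    rw [pow_mul_assoc, pow_mul_assoc] at h
    rw [eq_sub_of_add_eq h]
    abel

lemma hBA_lem (h3 : Dᴴ * C + Bᴴ * A = 0) (q : ℕ) (x : Matrix (Fin N) (Fin s) ℍ[ℝ]) :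
    Bᴴ * (A ^ (q + 1) * x) = -(Dᴴ * (C * (A ^ q * x))) := by
  have hBA : Bᴴ * A = -(Dᴴ * C) := eq_neg_of_add_eq_zero_right h3
  rw [← pow_mul_assoc, ← Matrix.mul_assoc Bᴴ, hBA]
  simp only [Matrix.neg_mul, Matrix.mul_assoc]

lemma en_orbit_const (h1 : Aᴴ * A + Cᴴ * C = 1) (x : Matrix (Fin N) (Fin s) ℍ[ℝ])
    (hx : ∀ q : ℕ, C * (A ^ q * x) = 0) (m : ℕ) : en (A ^ m * x) = en x := by
  induction m with
  | zero => rw [pow_zero, Matrix.one_mul]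
  | succ m ih =>
    have h := en_step h1 (A ^ m * x)
    rw [pow_mul_assoc] at h
    rw [hx m, en_zero, zero_add] at h
    rw [h, ih]

lemma key (h1 : Aᴴ * A + Cᴴ * C = 1) (h3 : Dᴴ * C + Bᴴ * A = 0) :
    Tendsto (fun m => en (A ^ m * B)) atTop (𝓝 0) := by
  set d : ℕ → ℝ := fun m => en (A ^ m * B) with hd
  have hstep : ∀ m, en (C * (A ^ m * B)) + d (m + 1) = d m := by
    intro m
    have h := en_step h1 (A ^ m * B)
    rwa [pow_mul_assoc] at h
  have hanti : Antitone d := by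
    refine antitone_nat_of_succ_le fun m => ?_
    have h := hstep m
    have h2 := en_nonneg (C * (A ^ m * B))
    linarith
  have hbdd : BddBelow (Set.range d) := by
    refine ⟨0, ?_⟩
    rintro x ⟨m, rfl⟩
    exact en_nonneg _
  have hconv : Tendsto d atTop (𝓝 (⨅ m, d m)) := tendsto_atTop_ciInf hanti hbdd
  set t := ⨅ m, d m with ht
  have hC0 : Tendsto (fun m => en (C * (A ^ m * B))) atTop (𝓝 0) := by
    have h2' : Tendsto (fun m => d m - d (m + 1)) atTop (𝓝 (t - t)) :=
      hconv.sub (hconv.comp (tendsto_add_atTop_nat 1))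
    rw [sub_self] at h2'
    refine h2'.congr fun m => ?_
    have := hstep m; linarith
  -- extract a convergent subsequence of the orbit of B
  obtain ⟨v, σ₀, hσ₀, hlim₀⟩ := exists_subseq_limE (fun m => A ^ m * B) (en B) (by
    intro m
    have h := hanti (Nat.zero_le m)
    have h0 : d 0 = en B := by rw [hd]; simp [pow_zero, Matrix.one_mul]
    rw [h0] at h
    exact h)
  -- shift so that indices are ≥ i + 1
  set σ : ℕ → ℕ := fun i => σ₀ (i + 1) with hσdef
  have hσ : StrictMono σ := fun a b hab => hσ₀ (by omega)
  have hσge : ∀ i, i + 1 ≤ σ i := fun i => (hσ₀.le_apply : i + 1 ≤ σ₀ (i + 1))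
  have hlim : LimE (fun i => A ^ σ i * B) v := by
    unfold LimE
    exact hlim₀.comp (tendsto_add_atTop_nat 1)
  have hσatTop : Tendsto σ atTop atTop := hσ.tendsto_atTop
  -- facts about the limit point v
  have hvC : ∀ q : ℕ, C * (A ^ q * v) = 0 := by
    intro q
    have l1 : LimE (fun i => C * (A ^ q * (A ^ σ i * B))) (C * (A ^ q * v)) :=
      (hlim.mul_left (A ^ q)).mul_left C
    refine l1.eq_zero ?_
    have heq : ∀ i, C * (A ^ q * (A ^ σ i * B)) = C * (A ^ (q + σ i) * B) := by
      intro i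
      rw [← Matrix.mul_assoc (A ^ q), ← pow_add]
    have hcomp : Tendsto (fun i => q + σ i) atTop atTop :=
      tendsto_atTop_mono (fun i => Nat.le_add_left _ _) hσatTop
    have hcc := hC0.comp hcomp
    refine hcc.congr fun i => ?_
    simp only [Function.comp_apply]
    rw [heq i]
  have hvB : Bᴴ * v = 0 := by
    have l1 : LimE (fun i => Bᴴ * (A ^ σ i * B)) (Bᴴ * v) := hlim.mul_left Bᴴ
    refine l1.eq_zero ?_
    have hb : ∀ i, en (Bᴴ * (A ^ σ i * B)) ≤ en Dᴴ * en (C * (A ^ (σ i - 1) * B)) := by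
      intro i
      have e1 : σ i = (σ i - 1) + 1 := by have := hσge i; omega
      calc en (Bᴴ * (A ^ σ i * B))
          = en (-(Dᴴ * (C * (A ^ (σ i - 1) * B)))) := by
            rw [show (A : Matrix (Fin N) (Fin N) ℍ[ℝ]) ^ σ i = A ^ ((σ i - 1) + 1) from by
              rw [← e1], hBA_lem h3]
        _ = en (Dᴴ * (C * (A ^ (σ i - 1) * B))) := en_neg _
        _ ≤ en Dᴴ * en (C * (A ^ (σ i - 1) * B)) := en_mul_le _ _
    have hg : Tendsto (fun i => en Dᴴ * en (C * (A ^ (σ i - 1) * B))) atTop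
        (𝓝 (en Dᴴ * 0)) := by
      refine Tendsto.const_mul _ (hC0.comp ?_)
      exact tendsto_atTop_mono (f := id) (fun i => by have := hσge i; simp; omega) tendsto_id
    rw [mul_zero] at hg
    exact squeeze_zero (fun i => en_nonneg _) hb hg
  have horb1 : ∀ q : ℕ, Aᴴ * (A * (A ^ q * v)) = A ^ q * v := by
    intro q
    have h1' : Aᴴ * A = 1 - Cᴴ * C := eq_sub_of_add_eq h1
    rw [← Matrix.mul_assoc Aᴴ A, h1', Matrix.sub_mul, Matrix.one_mul, Matrix.mul_assoc,
      hvC q, Matrix.mul_zero, sub_zero]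
  have horb : ∀ m q : ℕ, (A ^ m)ᴴ * (A ^ (m + q) * v) = A ^ q * v := by
    intro m
    induction m with
    | zero =>
      intro q
      simp only [pow_zero, conjTranspose_one, Matrix.one_mul, zero_add]
    | succ m ih =>
      intro q
      rw [pow_succ A m, conjTranspose_mul, Matrix.mul_assoc]
      have e1 : m + 1 + q = m + (q + 1) := by omega
      rw [e1, ih (q + 1), ← pow_mul_assoc, horb1 q]
  have hphiv0 : ∀ m q : ℕ, phi (A ^ m * B) (A ^ (m + q) * v) = 0 := by
    intro m q
    have hrw : phi (A ^ m * B) (A ^ (m + q) * v) = psi (Bᴴ * (A ^ q * v)) := by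
      unfold phi
      rw [conjTranspose_mul, Matrix.mul_assoc, horb m q]
    rw [hrw]
    cases q with
    | zero => rw [pow_zero, Matrix.one_mul, hvB, psi_zero]
    | succ q => rw [hBA_lem h3 q v, hvC q, Matrix.mul_zero, neg_zero, psi_zero]
  -- recurrence of the orbit of v
  have hrec : ∀ ε : ℝ, 0 < ε → ∀ nn : ℕ, ∃ g : ℕ, nn ≤ g ∧ en (v - A ^ g * v) < ε := by
    intro ε hε nn
    obtain ⟨w, τ, hτ, hwlim⟩ := exists_subseq_limE (fun j => A ^ (j * (nn + 1)) * v) (en v)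
      (fun j => le_of_eq (en_orbit_const h1 v hvC _))
    have hev : ∀ᶠ j in atTop, en (A ^ (τ j * (nn + 1)) * v - w) < ε / 4 :=
      hwlim.eventually_lt_const (by positivity)
    obtain ⟨j₀, hj₀⟩ := eventually_atTop.mp hev
    set a := τ j₀ with ha
    set c := τ (j₀ + 1) with hc
    have hac : a < c := hτ (by omega)
    have hone : en (A ^ (a * (nn + 1)) * v - w) < ε / 4 := hj₀ j₀ le_rfl
    have htwo : en (A ^ (c * (nn + 1)) * v - w) < ε / 4 := hj₀ (j₀ + 1) (by omega)
    have hdiff : en (A ^ (a * (nn + 1)) * v - A ^ (c * (nn + 1)) * v) < ε := by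
      have hsl := en_sub_le (A ^ (a * (nn + 1)) * v - w) (A ^ (c * (nn + 1)) * v - w)
      rw [sub_sub_sub_cancel_right] at hsl
      linarith
    refine ⟨(c - a) * (nn + 1), ?_, ?_⟩
    · have h1c : 1 ≤ c - a := by omega
      calc nn ≤ nn + 1 := by omega
        _ = 1 * (nn + 1) := (one_mul _).symm
        _ ≤ (c - a) * (nn + 1) := Nat.mul_le_mul_right _ h1c
    · have hxq : ∀ q : ℕ, C * (A ^ q * (v - A ^ ((c - a) * (nn + 1)) * v)) = 0 := by
        intro q
        rw [Matrix.mul_sub (A ^ q), ← Matrix.mul_assoc (A ^ q), ← pow_add, Matrix.mul_sub C,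
          hvC q, hvC (q + (c - a) * (nn + 1)), sub_zero]
      have hconst := en_orbit_const h1 _ hxq (a * (nn + 1))
      rw [← hconst]
      have hexp : a * (nn + 1) + (c - a) * (nn + 1) = c * (nn + 1) := by
        rw [← Nat.add_mul, Nat.add_sub_cancel' hac.le]
      have hsplit : A ^ (a * (nn + 1)) * (v - A ^ ((c - a) * (nn + 1)) * v)
          = A ^ (a * (nn + 1)) * v - A ^ (c * (nn + 1)) * v := by
        rw [Matrix.mul_sub, ← Matrix.mul_assoc, ← pow_add, hexp]
      rw [hsplit]
      exact hdiff
  -- pairing: phi (A^m B) v = 0 for every m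
  have hphiv : ∀ m : ℕ, phi (A ^ m * B) v = 0 := by
    intro m
    have hex : ∀ l : ℕ, ∃ g : ℕ, m ≤ g ∧ en (v - A ^ g * v) < 1 / ((l : ℝ) + 1) :=
      fun l => hrec (1 / ((l : ℝ) + 1)) (by positivity) m
    choose g hg hgen using hex
    have hlimg : LimE (fun l => A ^ g l * v) v := by
      unfold LimE
      refine squeeze_zero (fun l => en_nonneg _) (fun l => ?_)
        tendsto_one_div_add_atTop_nhds_zero_nat
      rw [en_sub_comm]
      exact (hgen l).le
    have hz : ∀ l, phi (A ^ m * B) (A ^ g l * v) = 0 := by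
      intro l
      have e := Nat.add_sub_cancel' (hg l)
      have hh := hphiv0 m (g l - m)
      rwa [e] at hh
    have hT := hlimg.phi_tendsto_right (A ^ m * B)
    have hT0 : Tendsto (fun l => phi (A ^ m * B) (A ^ g l * v)) atTop (𝓝 0) :=
      tendsto_const_nhds.congr fun l => (hz l).symm
    exact tendsto_nhds_unique hT hT0
  -- conclude
  have hent : Tendsto (fun i => en (A ^ σ i * B)) atTop (𝓝 (en v)) := hlim.en_tendsto
  have hsub : Tendsto (fun i => d (σ i)) atTop (𝓝 t) := hconv.comp hσatTop
  have hevt : en v = t := tendsto_nhds_unique hent hsub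
  have hphi_v : Tendsto (fun i => phi (A ^ σ i * B) v) atTop (𝓝 (phi v v)) :=
    hlim.phi_tendsto_left v
  have hphi_v0 : Tendsto (fun i => phi (A ^ σ i * B) v) atTop (𝓝 0) :=
    tendsto_const_nhds.congr fun i => (hphiv (σ i)).symm
  have hvv : phi v v = 0 := tendsto_nhds_unique hphi_v hphi_v0
  have ht0 : t = 0 := by rw [← hevt]; exact hvv
  rw [← ht0]
  exact hconv

end Main

end BlaschkeAux


open BlaschkeAux in
/-- If the block matrix `[[A, B], [C, D]]` with quaternionic entries is an isometry
(`AᴴA + CᴴC = I`, `BᴴB + DᴴD = I`, `DᴴC + BᴴA = 0`), then the coefficients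
`b₀ = D`, `b_n = C A^{n-1} B` satisfy `Σ_n b_nᴴ b_n = I` and `Σ_n b_nᴴ b_{n+k} = 0`
for every `k ≥ 1`; equivalently, the lower triangular block Toeplitz operator built
from `(b_n)` is an isometry from `ℓ²(ℕ, ℍ^s)` into `ℓ²(ℕ, ℍ^r)`. -/
theorem blaschke_toeplitz_isometry (N r s : ℕ)
    (A : Matrix (Fin N) (Fin N) ℍ[ℝ]) (B : Matrix (Fin N) (Fin s) ℍ[ℝ])
    (C : Matrix (Fin r) (Fin N) ℍ[ℝ]) (D : Matrix (Fin r) (Fin s) ℍ[ℝ])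
    (h1 : Aᴴ * A + Cᴴ * C = 1) (h2 : Bᴴ * B + Dᴴ * D = 1)
    (h3 : Dᴴ * C + Bᴴ * A = 0)
    (b : ℕ → Matrix (Fin r) (Fin s) ℍ[ℝ])
    (hb0 : b 0 = D) (hbn : ∀ n : ℕ, b (n + 1) = C * A ^ n * B) :
    HasSum (fun n => (b n)ᴴ * b n) (1 : Matrix (Fin s) (Fin s) ℍ[ℝ]) ∧
    ∀ k : ℕ, 1 ≤ k →
      HasSum (fun n => (b n)ᴴ * b (n + k)) (0 : Matrix (Fin s) (Fin s) ℍ[ℝ]) := by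
  have hK := key h1 h3
  have hEsum : Summable (fun n => en (b n)) := by
    refine summable_of_sum_range_le (c := (s : ℝ)) (fun n => en_nonneg _) fun m => ?_
    cases m with
    | zero => simp
    | succ m =>
      have hpsi := congrArg psi (tele1 h1 h2 b hb0 hbn m)
      rw [psi_sum, psi_sub, psi_one] at hpsi
      simp only [Fintype.card_fin] at hpsi
      have h' : ∑ n ∈ Finset.range (m + 1), en (b n) = (s : ℝ) - en (A ^ m * B) := by
        simpa only [en, phi] using hpsi
      rw [h']
      have := en_nonneg (A ^ m * B)
      linarith
  constructor
  · refine Pi.hasSum.2 fun i => Pi.hasSum.2 fun j => ?_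
    have hS : Summable (fun n => ((b n)ᴴ * b n) i j) := by
      refine Summable.of_norm_bounded hEsum fun n => ?_
      have hb := norm_entry_conj_mul_le (b n) (b n) i j
      linarith
    have hT1 : Tendsto (fun m => ∑ n ∈ Finset.range (m + 1), ((b n)ᴴ * b n) i j) atTop
        (𝓝 (∑' n, ((b n)ᴴ * b n) i j)) :=
      hS.hasSum.tendsto_sum_nat.comp (tendsto_add_atTop_nat 1)
    have heq : ∀ m, ∑ n ∈ Finset.range (m + 1), ((b n)ᴴ * b n) i j
        = (1 : Matrix (Fin s) (Fin s) ℍ[ℝ]) i j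
          - ((A ^ m * B)ᴴ * (A ^ m * B) : Matrix (Fin s) (Fin s) ℍ[ℝ]) i j := by
      intro m
      have hc := congrArg (fun M : Matrix (Fin s) (Fin s) ℍ[ℝ] => M i j)
        (tele1 h1 h2 b hb0 hbn m)
      simpa [Matrix.sum_apply, Matrix.sub_apply] using hc
    have hz : Tendsto
        (fun m => ((A ^ m * B)ᴴ * (A ^ m * B) : Matrix (Fin s) (Fin s) ℍ[ℝ]) i j)
        atTop (𝓝 0) := by
      refine squeeze_zero_norm (fun m => ?_) hK
      exact (norm_entry_conj_mul_le _ _ i j).trans (le_of_eq (by ring))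
    have hT2 : Tendsto (fun m => ∑ n ∈ Finset.range (m + 1), ((b n)ᴴ * b n) i j) atTop
        (𝓝 ((1 : Matrix (Fin s) (Fin s) ℍ[ℝ]) i j)) := by
      have h' : Tendsto (fun m => (1 : Matrix (Fin s) (Fin s) ℍ[ℝ]) i j
          - ((A ^ m * B)ᴴ * (A ^ m * B) : Matrix (Fin s) (Fin s) ℍ[ℝ]) i j) atTop
          (𝓝 ((1 : Matrix (Fin s) (Fin s) ℍ[ℝ]) i j - 0)) := tendsto_const_nhds.sub hz
      rw [sub_zero] at h'
      exact h'.congr fun m => (heq m).symm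
    have hfin := tendsto_nhds_unique hT1 hT2
    exact hfin ▸ hS.hasSum
  · intro k hk
    obtain ⟨k', rfl⟩ : ∃ k', k = k' + 1 := ⟨k - 1, by omega⟩
    refine Pi.hasSum.2 fun i => Pi.hasSum.2 fun j => ?_
    have hEsum' : Summable (fun n => en (b (n + (k' + 1)))) :=
      (summable_nat_add_iff (f := fun n => en (b n)) (k' + 1)).2 hEsum
    have hS : Summable (fun n => ((b n)ᴴ * b (n + (k' + 1))) i j) := by
      refine Summable.of_norm_bounded ((hEsum.add hEsum').div_const 2) fun n => ?_
      exact norm_entry_conj_mul_le _ _ i j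
    have hT1 : Tendsto (fun m => ∑ n ∈ Finset.range (m + 1), ((b n)ᴴ * b (n + (k' + 1))) i j)
        atTop (𝓝 (∑' n, ((b n)ᴴ * b (n + (k' + 1))) i j)) :=
      hS.hasSum.tendsto_sum_nat.comp (tendsto_add_atTop_nat 1)
    have heq : ∀ m, ∑ n ∈ Finset.range (m + 1), ((b n)ᴴ * b (n + (k' + 1))) i j
        = -(((A ^ m * B)ᴴ * (A ^ (m + (k' + 1)) * B) : Matrix (Fin s) (Fin s) ℍ[ℝ]) i j) := by
      intro m
      have hc := congrArg (fun M : Matrix (Fin s) (Fin s) ℍ[ℝ] => M i j)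
        (tele2 h1 h3 b hb0 hbn k' m)
      simpa [Matrix.sum_apply, Matrix.neg_apply] using hc
    have hz : Tendsto
        (fun m => ((A ^ m * B)ᴴ * (A ^ (m + (k' + 1)) * B) : Matrix (Fin s) (Fin s) ℍ[ℝ]) i j)
        atTop (𝓝 0) := by
      have hg : Tendsto (fun m => (en (A ^ m * B) + en (A ^ (m + (k' + 1)) * B)) / 2) atTop
          (𝓝 ((0 + 0) / 2)) := (hK.add (hK.comp (tendsto_add_atTop_nat (k' + 1)))).div_const 2
      rw [show ((0:ℝ) + 0) / 2 = 0 by ring] at hg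
      exact squeeze_zero_norm (fun m => norm_entry_conj_mul_le _ _ i j) hg
    have hT2 : Tendsto (fun m => ∑ n ∈ Finset.range (m + 1), ((b n)ᴴ * b (n + (k' + 1))) i j)
        atTop (𝓝 ((0 : Matrix (Fin s) (Fin s) ℍ[ℝ]) i j)) := by
      have h' := hz.neg
      rw [neg_zero] at h'
      rw [Matrix.zero_apply]
      exact h'.congr fun m => (heq m).symm
    have hfin := tendsto_nhds_unique hT1 hT2
    exact hfin ▸ hS.hasSum
end
end

section
/- Let S_n ∈ ℍ (n ∈ ℕ) be such that the lower triangular Toeplitz operator (S_{j−k})_{j≥k} is a contraction on ℓ²(ℕ, ℍ): for every finitely supported f : ℕ → ℍ, Σ_{n=0}^∞ |Σ_{k=0}^n S_{n−k}·f_k|² ≤ Σ_{k=0}^∞ |f_k|² (i.e. S = Σ_n P_n·S_n is a quaternionic Schur multiplier), and assume |S₀| < 1. For t ∈ (−1,1) set s(t) = Σ_{n=0}^∞ S_n·tⁿ (which converges, and 1 − conj(S₀)·s(t) ≠ 0). Then there exists a sequence S'_n ∈ ℍ whose lower triangular Toeplitz operator (S'_{j−k})_{j≥k} is also a contraction on ℓ²(ℕ,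 ℍ), such that for every t ∈ (−1,1) with t ≠ 0, Σ_{n=0}^∞ S'_n·tⁿ = t⁻¹·(s(t) − S₀)·(1 − conj(S₀)·s(t))⁻¹. (This is the Schur algorithm step: since P_n(x₀) = (3x₀)ⁿ for real x₀, the function S⁽¹⁾(3x₀) = (1/(3x₀))·(S(3x₀) − S(0))·(1 − conj(S(0))·S(3x₀))⁻¹ extends to a Schur multiplier.) -/
open Quaternion

noncomputable section

/-- The coefficients `T^m_j = 2(m-j+1)/((m+1)(m+2))`. -/
def appellT (m j : ℕ) : ℝ :=
  (2 * ((m : ℝ) - (j : ℝ) + 1)) / (((m : ℝ) + 1) * ((m : ℝ) + 2))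

/-- The `m`-th quaternionic Appell polynomial
`Q_m(x) = Σ_{j=0}^m T^m_j x^{m-j} x̄^j`. -/
def appellQ (m : ℕ) (x : ℍ[ℝ]) : ℍ[ℝ] :=
  ∑ j ∈ Finset.range (m + 1), appellT m j • (x ^ (m - j) * (star x) ^ j)

/-- The normalizing constants `c_m = Σ_{j=0}^m (-1)^j T^m_j`. -/
def appellc (m : ℕ) : ℝ := ∑ j ∈ Finset.range (m + 1), (-1 : ℝ) ^ j * appellT m j

/-- The polynomials `P_m = Q_m / c_m`. -/
def appellP (m : ℕ) (x : ℍ[ℝ]) : ℍ[ℝ] := (appellc m)⁻¹ • appellQ m x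

namespace SchurStepAux

open PowerSeries

/-- The fundamental pointwise quaternionic identity behind the Schur algorithm. -/
lemma key_identity (a g h : ℍ[ℝ]) :
    ‖h - a * g‖ ^ 2 = ‖g - star a * h‖ ^ 2 - (1 - ‖a‖ ^ 2) * (‖g‖ ^ 2 - ‖h‖ ^ 2) := by
  have hn : ∀ x : ℍ[ℝ], ‖x‖ ^ 2 = normSq x := by
    intro x; rw [sq, ← Quaternion.normSq_eq_norm_mul_self]
  simp only [hn, Quaternion.normSq_def', Quaternion.re_sub, Quaternion.imI_sub,
    Quaternion.imJ_sub, Quaternion.imK_sub, Quaternion.re_mul, Quaternion.imI_mul,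
    Quaternion.imJ_mul, Quaternion.imK_mul, Quaternion.re_star, Quaternion.imI_star,
    Quaternion.imJ_star, Quaternion.imK_star]
  ring

/-- Coefficients of products of power series, as a range sum (convolution). -/
lemma coeff_mul_range (φ ψ : ℍ[ℝ]⟦X⟧) (n : ℕ) :
    (coeff n) (φ * ψ) =
      ∑ k ∈ Finset.range (n + 1), coeff (n - k) φ * coeff k ψ := by
  rw [PowerSeries.coeff_mul, Finset.Nat.sum_antidiagonal_eq_sum_range_succ_mk]
  rw [← Finset.sum_range_reflect (fun k => coeff (n - k) φ * coeff k ψ) (n + 1)]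
  refine Finset.sum_congr rfl fun k hk => ?_
  rw [Finset.mem_range] at hk
  have h1 : n + 1 - 1 - k = n - k := by omega
  have h2 : n - (n - k) = k := by omega
  rw [h1, h2]

/-- A sum of `‖f n‖²` over a range is at most the sum over the support. -/
lemma sum_range_le_support (f : ℕ →₀ ℍ[ℝ]) (N : ℕ) :
    ∑ n ∈ Finset.range N, ‖f n‖ ^ 2 ≤ ∑ k ∈ f.support, ‖f k‖ ^ 2 := by
  classical
  have h1 : ∑ n ∈ Finset.range N, ‖f n‖ ^ 2
      = ∑ n ∈ (Finset.range N).filter (fun n => f n ≠ 0), ‖f n‖ ^ 2 :=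
    (Finset.sum_filter_of_ne (fun n _ hn => by
      intro h0; exact hn (by simp [h0]))).symm
  rw [h1]
  refine Finset.sum_le_sum_of_subset_of_nonneg ?_ (fun i _ _ => by positivity)
  intro x hx
  rw [Finset.mem_filter] at hx
  exact Finsupp.mem_support_iff.mpr hx.2

/-- `‖S n‖ ≤ 1` for coefficients of a contractive Toeplitz operator. -/
lemma norm_le_one_of_contr (S : ℕ → ℍ[ℝ])
    (hcontr : ∀ f : ℕ →₀ ℍ[ℝ], ∀ M : ℕ,
      ∑ n ∈ Finset.range M, ‖∑ k ∈ Finset.range (n + 1), S (n - k) * f k‖ ^ 2 ≤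
        ∑ k ∈ f.support, ‖f k‖ ^ 2) (n : ℕ) : ‖S n‖ ≤ 1 := by
  have h := hcontr (Finsupp.single 0 1) (n + 1)
  have hrow : ∀ m : ℕ,
      (∑ k ∈ Finset.range (m + 1), S (m - k) * (Finsupp.single 0 (1 : ℍ[ℝ])) k) = S m := by
    intro m
    rw [Finset.sum_eq_single 0]
    · simp
    · intro k _ hk; simp [Finsupp.single_apply, Ne.symm hk]
    · simp
  simp only [hrow] at h
  rw [Finsupp.support_single_ne_zero _ one_ne_zero] at h
  simp only [Finset.sum_singleton, Finsupp.single_eq_same, norm_one, one_pow] at h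
  have h2 : ‖S n‖ ^ 2 ≤ 1 := le_trans (Finset.single_le_sum
    (f := fun m => ‖S m‖ ^ 2) (fun m _ => by positivity) (Finset.self_mem_range_succ n)) h
  nlinarith [norm_nonneg (S n)]

/-- The contraction property extends to truncations of arbitrary power series. -/
lemma trunc_contr (S : ℕ → ℍ[ℝ])
    (hcontr : ∀ f : ℕ →₀ ℍ[ℝ], ∀ M : ℕ,
      ∑ n ∈ Finset.range M, ‖∑ k ∈ Finset.range (n + 1), S (n - k) * f k‖ ^ 2 ≤
        ∑ k ∈ f.support, ‖f k‖ ^ 2)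
    (g : ℍ[ℝ]⟦X⟧) (N : ℕ) :
    ∑ n ∈ Finset.range N, ‖coeff n (PowerSeries.mk S * g)‖ ^ 2 ≤
      ∑ n ∈ Finset.range N, ‖coeff n g‖ ^ 2 := by
  classical
  set f : ℕ →₀ ℍ[ℝ] := Finsupp.onFinset (Finset.range N)
    (fun k => if k < N then coeff k g else 0)
    (fun a ha => by rw [Finset.mem_range]; by_contra h; exact ha (if_neg h)) with hf
  have h := hcontr f N
  have hrow : ∀ n ∈ Finset.range N,
      ‖∑ k ∈ Finset.range (n + 1), S (n - k) * f k‖ ^ 2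
        = ‖coeff n (PowerSeries.mk S * g)‖ ^ 2 := by
    intro n hn
    rw [Finset.mem_range] at hn
    congr 2
    rw [coeff_mul_range]
    refine Finset.sum_congr rfl fun k hk => ?_
    rw [Finset.mem_range] at hk
    have hfk : f k = coeff k g := by
      simp only [hf, Finsupp.onFinset_apply]
      rw [if_pos (by omega)]
    rw [hfk, PowerSeries.coeff_mk]
  rw [Finset.sum_congr rfl hrow] at h
  refine le_trans h ?_
  calc ∑ k ∈ f.support, ‖f k‖ ^ 2
      ≤ ∑ k ∈ Finset.range N, ‖f k‖ ^ 2 :=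
        Finset.sum_le_sum_of_subset_of_nonneg Finsupp.support_onFinset_subset
          (fun i _ _ => by positivity)
    _ = ∑ k ∈ Finset.range N, ‖coeff k g‖ ^ 2 := by
        refine Finset.sum_congr rfl fun k hk => ?_
        rw [Finset.mem_range] at hk
        simp only [hf, Finsupp.onFinset_apply]
        rw [if_pos hk]

end SchurStepAux

open SchurStepAux PowerSeries

set_option maxHeartbeats 1600000 in
/-- The Schur algorithm step: if `S = Σ_n P_n S_n` is a quaternionic Schur multiplier
(i.e. the lower triangular Toeplitz operator `(S_{j-k})_{j≥k}` is a contraction on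
`ℓ²(ℕ, ℍ)`) with `|S₀| < 1`, then for `t ∈ (-1,1)` the series `s(t) = Σ_n S_n tⁿ`
converges, `1 - conj(S₀) s(t) ≠ 0`, and there is a sequence `S'` defining again a
contractive lower triangular Toeplitz operator whose generating function satisfies
`Σ_n S'_n tⁿ = t⁻¹ (s(t) - S₀)(1 - conj(S₀) s(t))⁻¹` for `t ≠ 0`. -/
theorem schur_algorithm_step (S : ℕ → ℍ[ℝ])
    (hcontr : ∀ f : ℕ →₀ ℍ[ℝ], ∀ M : ℕ,
      ∑ n ∈ Finset.range M, ‖∑ k ∈ Finset.range (n + 1), S (n - k) * f k‖ ^ 2 ≤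
        ∑ k ∈ f.support, ‖f k‖ ^ 2)
    (hS0 : ‖S 0‖ < 1) :
    (∀ t ∈ Set.Ioo (-1 : ℝ) 1, Summable fun n => t ^ n • S n) ∧
    (∀ t ∈ Set.Ioo (-1 : ℝ) 1,
      (1 : ℍ[ℝ]) - star (S 0) * (∑' n, t ^ n • S n) ≠ 0) ∧
    ∃ S' : ℕ → ℍ[ℝ],
      (∀ f : ℕ →₀ ℍ[ℝ], ∀ M : ℕ,
        ∑ n ∈ Finset.range M, ‖∑ k ∈ Finset.range (n + 1), S' (n - k) * f k‖ ^ 2 ≤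
          ∑ k ∈ f.support, ‖f k‖ ^ 2) ∧
      (∀ t ∈ Set.Ioo (-1 : ℝ) 1, Summable fun n => t ^ n • S' n) ∧
      (∀ t ∈ Set.Ioo (-1 : ℝ) 1, t ≠ 0 →
        (∑' n, t ^ n • S' n) =
          t⁻¹ • (((∑' n, t ^ n • S n) - S 0) *
            ((1 : ℍ[ℝ]) - star (S 0) * (∑' n, t ^ n • S n))⁻¹)) := by
  classical
  set a := S 0 with ha
  have hnormS : ∀ n, ‖S n‖ ≤ 1 := norm_le_one_of_contr S hcontr
  have ha2 : ‖a‖ ^ 2 < 1 := by nlinarith [norm_nonneg a]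
  have hd : (1 : ℍ[ℝ]) - star a * a ≠ 0 := by
    rw [Quaternion.star_mul_self]
    intro hcon
    have h1 := congrArg QuaternionAlgebra.re hcon
    simp only [Quaternion.re_sub, Quaternion.re_one, Quaternion.re_coe,
      Quaternion.re_zero] at h1
    have h2 : normSq a = ‖a‖ * ‖a‖ := Quaternion.normSq_eq_norm_mul_self a
    nlinarith
  -- power series setup
  set F : ℍ[ℝ]⟦X⟧ := PowerSeries.mk S with hF
  set Dser : ℍ[ℝ]⟦X⟧ := 1 - PowerSeries.C (star a) * F with hDser
  set G : ℍ[ℝ]⟦X⟧ := Dser.invOfUnit (Units.mk0 _ hd) with hG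
  have hconst : constantCoeff Dser = (1 : ℍ[ℝ]) - star a * a := by
    simp [hDser, hF, ← PowerSeries.coeff_zero_eq_constantCoeff]
    exact Or.inl rfl
  have hDG : Dser * G = 1 := PowerSeries.mul_invOfUnit _ _ (by rw [hconst]; rfl)
  set Bser : ℍ[ℝ]⟦X⟧ := PowerSeries.mk (fun m => S (m + 1)) with hBser
  set S' : ℕ → ℍ[ℝ] := fun n => coeff n (Bser * G) with hS'
  have hXB : (X : ℍ[ℝ]⟦X⟧) * Bser = F - PowerSeries.C a := by
    refine PowerSeries.ext fun n => ?_
    cases n with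
    | zero =>
      simp [PowerSeries.coeff_zero_eq_constantCoeff, hBser, hF, ← ha]
    | succ n =>
      rw [PowerSeries.coeff_succ_X_mul]
      simp [hBser, hF, PowerSeries.coeff_C]
  have hDco : ∀ (g : ℍ[ℝ]⟦X⟧) (n : ℕ), coeff n (Dser * g)
      = coeff n g - star a * coeff n (F * g) := by
    intro g n
    simp only [hDser, sub_mul, one_mul, map_sub, mul_assoc, PowerSeries.coeff_C_mul]
  -- The key quadratic inequality.
  have hmain : ∀ (g : ℍ[ℝ]⟦X⟧) (N : ℕ),
      ∑ n ∈ Finset.range N, ‖coeff n ((F - PowerSeries.C a) * g)‖ ^ 2 ≤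
        ∑ n ∈ Finset.range N, ‖coeff n (Dser * g)‖ ^ 2 := by
    intro g N
    have hW : ∀ n, coeff n ((F - PowerSeries.C a) * g)
        = coeff n (F * g) - a * coeff n g := by
      intro n; rw [sub_mul, map_sub, PowerSeries.coeff_C_mul]
    have hpoint : ∀ n, ‖coeff n ((F - PowerSeries.C a) * g)‖ ^ 2
        = ‖coeff n (Dser * g)‖ ^ 2
          - (1 - ‖a‖ ^ 2) * (‖coeff n g‖ ^ 2 - ‖coeff n (F * g)‖ ^ 2) := by
      intro n; rw [hW, hDco]; exact key_identity a _ _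
    have hT : ∑ n ∈ Finset.range N, ‖coeff n (F * g)‖ ^ 2 ≤
        ∑ n ∈ Finset.range N, ‖coeff n g‖ ^ 2 := trunc_contr S hcontr g N
    have ha1 : (0 : ℝ) ≤ 1 - ‖a‖ ^ 2 := by linarith
    calc ∑ n ∈ Finset.range N, ‖coeff n ((F - PowerSeries.C a) * g)‖ ^ 2
        = ∑ n ∈ Finset.range N, (‖coeff n (Dser * g)‖ ^ 2
            - (1 - ‖a‖ ^ 2) * (‖coeff n g‖ ^ 2 - ‖coeff n (F * g)‖ ^ 2)) :=
          Finset.sum_congr rfl fun n _ => hpoint n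
      _ = (∑ n ∈ Finset.range N, ‖coeff n (Dser * g)‖ ^ 2)
            - (1 - ‖a‖ ^ 2) * ((∑ n ∈ Finset.range N, ‖coeff n g‖ ^ 2)
              - ∑ n ∈ Finset.range N, ‖coeff n (F * g)‖ ^ 2) := by
          rw [Finset.sum_sub_distrib, ← Finset.mul_sum, Finset.sum_sub_distrib]
      _ ≤ ∑ n ∈ Finset.range N, ‖coeff n (Dser * g)‖ ^ 2 := by nlinarith
  -- the contraction property for `S'`
  have hcontr' : ∀ f : ℕ →₀ ℍ[ℝ], ∀ M : ℕ,
      ∑ n ∈ Finset.range M, ‖∑ k ∈ Finset.range (n + 1), S' (n - k) * f k‖ ^ 2 ≤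
        ∑ k ∈ f.support, ‖f k‖ ^ 2 := by
    intro f M
    set g : ℍ[ℝ]⟦X⟧ := G * PowerSeries.mk (f : ℕ → ℍ[ℝ]) with hg
    have hDg : Dser * g = PowerSeries.mk (f : ℕ → ℍ[ℝ]) := by
      rw [hg, ← mul_assoc, hDG, one_mul]
    have hrow : ∀ n, (∑ k ∈ Finset.range (n + 1), S' (n - k) * f k)
        = coeff (n + 1) ((F - PowerSeries.C a) * g) := by
      intro n
      have e1 : (∑ k ∈ Finset.range (n + 1), S' (n - k) * f k)
          = coeff n ((Bser * G) * PowerSeries.mk (f : ℕ → ℍ[ℝ])) := by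
        rw [coeff_mul_range]
        exact Finset.sum_congr rfl fun k _ => by rw [PowerSeries.coeff_mk]
      rw [e1, mul_assoc, ← hg, ← PowerSeries.coeff_succ_X_mul, ← mul_assoc, hXB]
    calc ∑ n ∈ Finset.range M, ‖∑ k ∈ Finset.range (n + 1), S' (n - k) * f k‖ ^ 2
        = ∑ n ∈ Finset.range M,
            ‖coeff (n + 1) ((F - PowerSeries.C a) * g)‖ ^ 2 :=
          Finset.sum_congr rfl fun n _ => by rw [hrow]
      _ ≤ ∑ n ∈ Finset.range (M + 1),
            ‖coeff n ((F - PowerSeries.C a) * g)‖ ^ 2 := by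
          rw [Finset.sum_range_succ']
          have : (0:ℝ) ≤ ‖coeff 0 ((F - PowerSeries.C a) * g)‖ ^ 2 := by positivity
          linarith
      _ ≤ ∑ n ∈ Finset.range (M + 1), ‖coeff n (Dser * g)‖ ^ 2 := hmain g (M + 1)
      _ = ∑ n ∈ Finset.range (M + 1), ‖f n‖ ^ 2 := by
          rw [hDg]; exact Finset.sum_congr rfl fun n _ => by rw [PowerSeries.coeff_mk]
      _ ≤ ∑ k ∈ f.support, ‖f k‖ ^ 2 := sum_range_le_support f (M + 1)
  have hnormS' : ∀ n, ‖S' n‖ ≤ 1 := norm_le_one_of_contr S' hcontr'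
  -- bound on the coefficients of G
  have hGbound : ∀ n, ‖coeff n G‖ ≤
      Real.sqrt (‖coeff 0 G‖ ^ 2 / (1 - ‖a‖ ^ 2)) := by
    have hGsq : ∀ N, (1 - ‖a‖ ^ 2) * ∑ n ∈ Finset.range (N + 1), ‖coeff n G‖ ^ 2
        ≤ ‖coeff 0 G‖ ^ 2 := by
      intro N
      have hco : ∀ n, coeff n (1 : ℍ[ℝ]⟦X⟧)
          = coeff n G - star a * coeff n (F * G) := by
        intro n; rw [← hDG]; exact hDco G n
      have hco' : ∀ n, coeff (n + 1) G = star a * coeff (n + 1) (F * G) := by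
        intro n
        have := hco (n + 1)
        rw [PowerSeries.coeff_one, if_neg (Nat.succ_ne_zero n)] at this
        have := this.symm
        rw [sub_eq_zero] at this
        exact this
      have hnn : ∀ n, ‖coeff (n + 1) G‖ ^ 2
          ≤ ‖a‖ ^ 2 * ‖coeff (n + 1) (F * G)‖ ^ 2 := by
        intro n
        rw [hco', norm_mul, _root_.norm_star, mul_pow]
      have hT := trunc_contr S hcontr G (N + 1)
      have hsplit : ∑ n ∈ Finset.range (N + 1), ‖coeff n G‖ ^ 2
          = (∑ n ∈ Finset.range N, ‖coeff (n + 1) G‖ ^ 2) + ‖coeff 0 G‖ ^ 2 :=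
        Finset.sum_range_succ' _ N
      have hsplit2 : ∑ n ∈ Finset.range (N + 1), ‖coeff n (F * G)‖ ^ 2
          = (∑ n ∈ Finset.range N, ‖coeff (n + 1) (F * G)‖ ^ 2)
            + ‖coeff 0 (F * G)‖ ^ 2 :=
        Finset.sum_range_succ' _ N
      have h4 : ∑ n ∈ Finset.range N, ‖coeff (n + 1) G‖ ^ 2
          ≤ ‖a‖ ^ 2 * ∑ n ∈ Finset.range N, ‖coeff (n + 1) (F * G)‖ ^ 2 := by
        rw [Finset.mul_sum]
        exact Finset.sum_le_sum fun n _ => hnn n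
      have h5 : ∑ n ∈ Finset.range N, ‖coeff (n + 1) (F * G)‖ ^ 2
          ≤ ∑ n ∈ Finset.range (N + 1), ‖coeff n G‖ ^ 2 := by
        have : ∑ n ∈ Finset.range N, ‖coeff (n + 1) (F * G)‖ ^ 2
            ≤ ∑ n ∈ Finset.range (N + 1), ‖coeff n (F * G)‖ ^ 2 := by
          rw [hsplit2]
          have : (0:ℝ) ≤ ‖coeff 0 (F * G)‖ ^ 2 := by positivity
          linarith
        exact le_trans this hT
      have hnn2 : (0:ℝ) ≤ ‖a‖ ^ 2 := by positivity
      nlinarith [hsplit, h4, h5]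
    intro n
    have h1 := hGsq n
    have h2 : ‖coeff n G‖ ^ 2 ≤ ∑ m ∈ Finset.range (n + 1), ‖coeff m G‖ ^ 2 :=
      Finset.single_le_sum (f := fun m => ‖coeff m G‖ ^ 2)
        (fun m _ => by positivity) (Finset.self_mem_range_succ n)
    have h3 : ‖coeff n G‖ ^ 2 ≤ ‖coeff 0 G‖ ^ 2 / (1 - ‖a‖ ^ 2) := by
      rw [le_div_iff₀ (by linarith)]
      nlinarith
    calc ‖coeff n G‖ = Real.sqrt (‖coeff n G‖ ^ 2) :=
          (Real.sqrt_sq (norm_nonneg _)).symm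
      _ ≤ Real.sqrt (‖coeff 0 G‖ ^ 2 / (1 - ‖a‖ ^ 2)) := Real.sqrt_le_sqrt h3
  -- summability helper
  have hsummable : ∀ (c : ℝ) (Y : ℕ → ℍ[ℝ]), (∀ n, ‖Y n‖ ≤ c) → ∀ t : ℝ, |t| < 1 →
      Summable (fun n => ‖t ^ n • Y n‖) := by
    intro c Y hY t ht
    have hc : 0 ≤ c := le_trans (norm_nonneg _) (hY 0)
    refine Summable.of_nonneg_of_le (fun n => norm_nonneg _) (fun n => ?_)
      ((summable_geometric_of_lt_one (abs_nonneg t) ht).mul_left c)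
    rw [norm_smul, norm_pow, Real.norm_eq_abs]
    calc |t| ^ n * ‖Y n‖ ≤ |t| ^ n * c := by
          exact mul_le_mul_of_nonneg_left (hY n) (by positivity)
      _ = c * |t| ^ n := mul_comm _ _
  -- Cauchy products
  have hcauchy : ∀ (t : ℝ) (φ ψ : ℍ[ℝ]⟦X⟧),
      Summable (fun n => ‖t ^ n • coeff n φ‖) →
      Summable (fun n => ‖t ^ n • coeff n ψ‖) →
      (∑' n, t ^ n • coeff n φ) * (∑' n, t ^ n • coeff n ψ)
        = ∑' n, t ^ n • coeff n (φ * ψ) := by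
    intro t φ ψ hφ hψ
    rw [tsum_mul_tsum_eq_tsum_sum_antidiagonal_of_summable_norm hφ hψ]
    refine tsum_congr fun n => ?_
    rw [PowerSeries.coeff_mul, Finset.smul_sum]
    refine Finset.sum_congr rfl fun p hp => ?_
    rw [Finset.HasAntidiagonal.mem_antidiagonal] at hp
    rw [smul_mul_assoc, mul_smul_comm, smul_smul, ← pow_add, hp]
  -- summability of the relevant series
  have hsumS : ∀ t : ℝ, |t| < 1 → Summable (fun n => ‖t ^ n • S n‖) :=
    fun t ht => hsummable 1 S hnormS t ht
  have hsumS' : ∀ t : ℝ, |t| < 1 → Summable (fun n => ‖t ^ n • S' n‖) :=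
    fun t ht => hsummable 1 S' hnormS' t ht
  have hsumB : ∀ t : ℝ, |t| < 1 → Summable (fun n => ‖t ^ n • S (n + 1)‖) :=
    fun t ht => hsummable 1 (fun n => S (n + 1)) (fun n => hnormS (n + 1)) t ht
  have hsumG : ∀ t : ℝ, |t| < 1 → Summable (fun n => ‖t ^ n • coeff n G‖) :=
    fun t ht => hsummable _ (fun n => coeff n G) hGbound t ht
  have hsumD : ∀ t : ℝ, |t| < 1 → Summable (fun n => ‖t ^ n • coeff n Dser‖) := by
    intro t ht
    refine hsummable 2 (fun n => coeff n Dser) (fun n => ?_) t ht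
    show ‖coeff n Dser‖ ≤ 2
    have : coeff n Dser = (if n = 0 then 1 else 0) - star a * S n := by
      simp [hDser, PowerSeries.coeff_one, map_sub, PowerSeries.coeff_C_mul, hF]
    rw [this]
    calc ‖(if n = 0 then (1:ℍ[ℝ]) else 0) - star a * S n‖
        ≤ ‖(if n = 0 then (1:ℍ[ℝ]) else 0)‖ + ‖star a * S n‖ := norm_sub_le _ _
      _ ≤ 1 + 1 := by
          gcongr
          · split <;> simp
          · rw [norm_mul, _root_.norm_star]
            calc ‖a‖ * ‖S n‖ ≤ 1 * 1 := by
                  apply mul_le_mul (hnormS 0) (hnormS n) (norm_nonneg _) zero_le_one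
              _ = 1 := one_mul 1
      _ = 2 := by norm_num
  -- tsum of Dser coefficients
  have hDt : ∀ t : ℝ, |t| < 1 →
      (∑' n, t ^ n • coeff n Dser) = 1 - star a * (∑' n, t ^ n • S n) := by
    intro t ht
    have hDcoeff : ∀ n, coeff n Dser = (if n = 0 then 1 else 0) - star a * S n := by
      intro n
      simp [hDser, PowerSeries.coeff_one, map_sub, PowerSeries.coeff_C_mul, hF]
    have h1 : Summable (fun n => t ^ n • (if n = 0 then (1:ℍ[ℝ]) else 0)) := by
      apply summable_of_ne_finset_zero (s := {0})
      intro b hb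
      simp only [Finset.mem_singleton] at hb
      simp [hb]
    have h2 : Summable (fun n => t ^ n • (star a * S n)) := by
      have : (fun n => t ^ n • (star a * S n)) = fun n => star a * (t ^ n • S n) := by
        funext n; rw [mul_smul_comm]
      rw [this]
      exact (hsumS t ht).of_norm.mul_left (star a)
    calc (∑' n, t ^ n • coeff n Dser)
        = ∑' n, (t ^ n • (if n = 0 then (1:ℍ[ℝ]) else 0) - t ^ n • (star a * S n)) :=
          tsum_congr fun n => by rw [hDcoeff, smul_sub]
      _ = (∑' n, t ^ n • (if n = 0 then (1:ℍ[ℝ]) else 0))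
            - ∑' n, t ^ n • (star a * S n) := Summable.tsum_sub h1 h2
      _ = 1 - star a * (∑' n, t ^ n • S n) := by
          congr 1
          · rw [tsum_eq_single 0 (fun b hb => by simp [hb])]
            simp
          · calc (∑' n, t ^ n • (star a * S n))
                = ∑' n, star a * (t ^ n • S n) :=
                  tsum_congr fun n => (mul_smul_comm _ _ _).symm
              _ = star a * (∑' n, t ^ n • S n) := tsum_mul_left
  -- the fundamental identity (1 - a* s(t)) α(t) = 1
  have hE1 : ∀ t : ℝ, |t| < 1 →
      ((1 : ℍ[ℝ]) - star a * (∑' n, t ^ n • S n)) * (∑' n, t ^ n • coeff n G) = 1 := by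
    intro t ht
    rw [← hDt t ht, hcauchy t Dser G (hsumD t ht) (hsumG t ht), hDG]
    rw [tsum_eq_single 0 (fun b hb => by simp [PowerSeries.coeff_one, hb])]
    simp [PowerSeries.coeff_one]
  have habs : ∀ t : ℝ, t ∈ Set.Ioo (-1 : ℝ) 1 → |t| < 1 := by
    intro t ht
    rw [abs_lt]; exact ⟨ht.1, ht.2⟩
  refine ⟨fun t ht => (hsumS t (habs t ht)).of_norm, fun t ht h0 => ?_, S', hcontr',
    fun t ht => (hsumS' t (habs t ht)).of_norm, fun t ht htne => ?_⟩
  · have := hE1 t (habs t ht)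
    rw [h0, zero_mul] at this
    exact zero_ne_one this
  · -- the generating function identity
    have ht' := habs t ht
    have hE2 : (∑' n, t ^ n • S' n)
        = (∑' n, t ^ n • S (n + 1)) * (∑' n, t ^ n • coeff n G) := by
      have hc := hcauchy t Bser G (by
          have : ∀ n, coeff n Bser = S (n + 1) := fun n => PowerSeries.coeff_mk _ _
          simpa [this] using hsumB t ht') (hsumG t ht')
      calc (∑' n, t ^ n • S' n) = ∑' n, t ^ n • coeff n (Bser * G) :=
            tsum_congr fun n => rfl
        _ = (∑' n, t ^ n • coeff n Bser) * (∑' n, t ^ n • coeff n G) := hc.symm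
        _ = (∑' n, t ^ n • S (n + 1)) * (∑' n, t ^ n • coeff n G) := by
            congr 1
            exact tsum_congr fun n => by rw [PowerSeries.coeff_mk]
    have hE3 : (∑' n, t ^ n • S n) = a + t • (∑' n, t ^ n • S (n + 1)) := by
      rw [Summable.tsum_eq_zero_add (hsumS t ht').of_norm]
      congr 1
      · simp [ha]
      · calc (∑' n, t ^ (n + 1) • S (n + 1))
            = ∑' n, t • (t ^ n • S (n + 1)) := by
              refine tsum_congr fun n => ?_
              rw [smul_smul, ← pow_succ']
          _ = t • (∑' n, t ^ n • S (n + 1)) := Summable.tsum_const_smul t (hsumB t ht').of_norm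
    have hinv : ((1 : ℍ[ℝ]) - star (S 0) * (∑' n, t ^ n • S n))⁻¹
        = ∑' n, t ^ n • coeff n G := by
      exact inv_eq_of_mul_eq_one_right (hE1 t ht')
    have hsub : (∑' n, t ^ n • S n) - a = t • (∑' n, t ^ n • S (n + 1)) := by
      rw [hE3]; abel
    rw [hE2, hinv, hsub, smul_mul_assoc, smul_smul, inv_mul_cancel₀ htne, one_smul]
end
end
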